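/- Under the same hypotheses (perfect fluid space-time, n ≥ 4, divergence-free Weyl tensor, equation of state p = p(μ) with p'(μ) ≠ 0, p + μ nowhere zero), the velocity field u is irrotational: ∇_k u_j = ∇_j u_k. -/

import Mathlib

/-!
STATEMENT 18.  Perfect fluid space-time of dimension n ≥ 4 arising from Einstein's
equations (R_{ij} = κ(p+μ)u_iu_j + (κ(p-μ)/(2-n))g_{ij}, so A = κ(p-μ)/(2-n),
B = κ(p+μ)), with divergence-free Weyl tensor, a differentiable equation of state
p = P(μ), and p + μ nowhere zero.  Then the velocity field u is irrotational:
∇_k u_j = ∇_j u_k.  Here additionally p'(μ) ≠ 0.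
Component-level formalization; the divergence-free Weyl condition is expressed in
its equivalent Codazzi form, and the equations of motion (from ∇_k T^{kj} = 0,
a consequence of Einstein's equations and the Bianchi identity) are included as
structural hypotheses.
-/
private lemma sum_five {N : ℕ} (c1 c2 c3 c4 c5 : ℝ) (f1 f2 f3 f4 f5 : Fin N → ℝ)
    (s1 s2 s3 s4 s5 : ℝ) (h1 : ∑ j, f1 j = s1) (h2 : ∑ j, f2 j = s2)
    (h3 : ∑ j, f3 j = s3) (h4 : ∑ j, f4 j = s4) (h5 : ∑ j, f5 j = s5) :
    ∑ j, (c1 * f1 j + c2 * f2 j + c3 * f3 j + c4 * f4 j + c5 * f5 j)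
      = c1 * s1 + c2 * s2 + c3 * s3 + c4 * s4 + c5 * s5 := by
  simp only [Finset.sum_add_distrib, ← Finset.mul_sum, h1, h2, h3, h4, h5]

theorem perfect_fluid_eos_irrotational
    (n : ℕ) (hn : 4 ≤ n) (M : Type*)
    (g ginv : M → Fin n → Fin n → ℝ)
    (p μ : M → ℝ) (Dp Dμ : M → Fin n → ℝ)
    (u : M → Fin n → ℝ) (Du : M → Fin n → Fin n → ℝ)
    (κ : ℝ) (hκ : κ ≠ 0) (P : ℝ → ℝ)
    (hg : ∀ x i j, g x i j = g x j i)
    (hginv : ∀ x i j, ∑ m, ginv x i m * g x m j = if i = j then (1:ℝ) else 0)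
    (hginvsymm : ∀ x i j, ginv x i j = ginv x j i)
    -- u is a unit timelike vector field: u^j u_j = -1, hence u^l ∇_k u_l = 0
    (hunit : ∀ x, ∑ i, ∑ j, ginv x i j * u x i * u x j = -1)
    (hDu : ∀ x k, ∑ l, ∑ m, ginv x l m * u x m * Du x k l = 0)
    -- differentiable equation of state p = P(μ), with the chain rule ∇p = P'(μ)∇μ
    (hP : Differentiable ℝ P) (hP' : ∀ x, deriv P (μ x) ≠ 0)
    (heos : ∀ x, p x = P (μ x))
    (hchain : ∀ x j, Dp x j = deriv P (μ x) * Dμ x j)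
    -- p + μ nowhere zero
    (hpμ : ∀ x, p x + μ x ≠ 0)
    -- ∇_m C_{jkl}{}^m = 0 in its equivalent Codazzi form, with
    -- A = κ(p-μ)/(2-n), B = κ(p+μ), R = nA - B
    (hWeyl : ∀ x k l j,
        ((κ * (Dp x k - Dμ x k) / (2 - (n:ℝ))) * g x j l
          + κ * (Dp x k + Dμ x k) * u x j * u x l
          + κ * (p x + μ x) * (Du x k j * u x l + u x j * Du x k l))
        - ((κ * (Dp x l - Dμ x l) / (2 - (n:ℝ))) * g x j k
          + κ * (Dp x l + Dμ x l) * u x j * u x k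
          + κ * (p x + μ x) * (Du x l j * u x k + u x j * Du x l k))
      = (1/(2*((n:ℝ) - 1))) *
          (g x j l * ((n:ℝ) * (κ * (Dp x k - Dμ x k) / (2 - (n:ℝ)))
              - κ * (Dp x k + Dμ x k))
            - g x j k * ((n:ℝ) * (κ * (Dp x l - Dμ x l) / (2 - (n:ℝ)))
              - κ * (Dp x l + Dμ x l))))
    -- equations of motion (from ∇_k T^{kj} = 0)
    (hmot1 : ∀ x, (∑ k, ∑ a, ginv x k a * u x a * Dμ x k)
        + (p x + μ x) * (∑ k, ∑ a, ginv x k a * Du x k a) = 0)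
    (hmot2 : ∀ x j, Dp x j + u x j * (∑ k, ∑ a, ginv x k a * u x a * Dp x k)
        + (p x + μ x) * (∑ k, ∑ a, ginv x k a * u x a * Du x k j) = 0) :
    -- conclusion: u is irrotational
    ∀ x k j, Du x k j = Du x j k := by
  intro x k j
  have hn4 : (4:ℝ) ≤ (n:ℝ) := by exact_mod_cast hn
  have h2n : (2:ℝ) - (n:ℝ) ≠ 0 := ne_of_lt (by linarith)
  have hn1 : ((n:ℝ) - 1) ≠ 0 := ne_of_gt (by linarith)
  have hn2 : ((n:ℝ) - 2) ≠ 0 := ne_of_gt (by linarith)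
  -- raised velocity
  set U : Fin n → ℝ := fun i => ∑ a, ginv x i a * u x a with hU
  -- contraction helper
  have hcontr : ∀ f : Fin n → ℝ,
      (∑ m, ∑ a, ginv x m a * u x a * f m) = ∑ m, U m * f m := by
    intro f
    refine Finset.sum_congr rfl fun m _ => ?_
    simp only [hU, ← Finset.sum_mul]
  -- F1 : U·u = -1
  have F1 : ∑ i, U i * u x i = -1 := by
    rw [← hunit x]
    refine Finset.sum_congr rfl fun i _ => ?_
    simp only [hU, Finset.sum_mul]
    exact Finset.sum_congr rfl fun a _ => by ring
  -- F2 : u^l ∇_m u_l = 0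
  have F2 : ∀ m, ∑ l, U l * Du x m l = 0 := fun m => (hcontr _).symm.trans (hDu x m)
  -- F3 : raising then lowering
  have F3 : ∀ i, ∑ jj, U jj * g x jj i = u x i := by
    intro i
    calc ∑ jj, U jj * g x jj i = ∑ jj, ∑ a, ginv x jj a * u x a * g x jj i := by
          refine Finset.sum_congr rfl fun jj _ => ?_
          simp only [hU, Finset.sum_mul]
      _ = ∑ a, ∑ jj, ginv x jj a * u x a * g x jj i := Finset.sum_comm
      _ = ∑ a, u x a * ∑ jj, ginv x a jj * g x jj i := by
          refine Finset.sum_congr rfl fun a _ => ?_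
          rw [Finset.mul_sum]
          refine Finset.sum_congr rfl fun jj _ => ?_
          rw [hginvsymm x jj a]; ring
      _ = ∑ a, u x a * (if a = i then (1:ℝ) else 0) := by
          refine Finset.sum_congr rfl fun a _ => ?_
          rw [hginv x a i]
      _ = u x i := by simp
  -- cleared-denominator Weyl/Codazzi identity
  have hW2 : ∀ a b jj,
      2*((n:ℝ)-1) * (κ*(Dp x a - Dμ x a) * g x jj b - κ*(Dp x b - Dμ x b) * g x jj a)
      + 2*((n:ℝ)-1)*(2-(n:ℝ)) * ( κ*(Dp x a + Dμ x a)*u x jj*u x b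
          + κ*(p x + μ x)*(Du x a jj*u x b + u x jj*Du x a b)
          - κ*(Dp x b + Dμ x b)*u x jj*u x a
          - κ*(p x + μ x)*(Du x b jj*u x a + u x jj*Du x b a) )
      = g x jj b * ((n:ℝ)*(κ*(Dp x a - Dμ x a)) - (2-(n:ℝ))*κ*(Dp x a + Dμ x a))
        - g x jj a * ((n:ℝ)*(κ*(Dp x b - Dμ x b)) - (2-(n:ℝ))*κ*(Dp x b + Dμ x b)) := by
    intro a b jj
    have h := hWeyl x a b jj
    field_simp at h
    apply mul_left_cancel₀ h2n
    linear_combination (2 - (n:ℝ)) * κ * h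
  -- single contraction of the Codazzi identity with U over the index jj
  have E2 : ∀ a b : Fin n,
      ((2*((n:ℝ)-1)*((n:ℝ)-2)*κ) * Dp x a + (2*((n:ℝ)-2)^2*κ) * Dμ x a) * u x b
      - ((2*((n:ℝ)-1)*((n:ℝ)-2)*κ) * Dp x b + (2*((n:ℝ)-2)^2*κ) * Dμ x b) * u x a
      - (2*((n:ℝ)-1)*(2-(n:ℝ))*κ*(p x + μ x)) * (Du x a b - Du x b a) = 0 := by
    intro a b
    have e1 : ∑ jj,
        ((2*((n:ℝ)-1)*(κ*(Dp x a - Dμ x a))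
            - ((n:ℝ)*(κ*(Dp x a - Dμ x a)) - (2-(n:ℝ))*κ*(Dp x a + Dμ x a)))
            * (U jj * g x jj b)
          + (-(2*((n:ℝ)-1)*(κ*(Dp x b - Dμ x b)))
            + ((n:ℝ)*(κ*(Dp x b - Dμ x b)) - (2-(n:ℝ))*κ*(Dp x b + Dμ x b)))
            * (U jj * g x jj a)
          + (2*((n:ℝ)-1)*(2-(n:ℝ))*(κ*(Dp x a + Dμ x a)*u x b
              + κ*(p x + μ x)*Du x a b - κ*(Dp x b + Dμ x b)*u x a
              - κ*(p x + μ x)*Du x b a))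
            * (U jj * u x jj)
          + (2*((n:ℝ)-1)*(2-(n:ℝ))*κ*(p x + μ x)*u x b) * (U jj * Du x a jj)
          + (-(2*((n:ℝ)-1)*(2-(n:ℝ))*κ*(p x + μ x)*u x a)) * (U jj * Du x b jj)) = 0 :=
      Finset.sum_eq_zero fun jj _ => by linear_combination (U jj) * hW2 a b jj
    have e2 := sum_five
      (2*((n:ℝ)-1)*(κ*(Dp x a - Dμ x a))
        - ((n:ℝ)*(κ*(Dp x a - Dμ x a)) - (2-(n:ℝ))*κ*(Dp x a + Dμ x a)))
      (-(2*((n:ℝ)-1)*(κ*(Dp x b - Dμ x b)))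
        + ((n:ℝ)*(κ*(Dp x b - Dμ x b)) - (2-(n:ℝ))*κ*(Dp x b + Dμ x b)))
      (2*((n:ℝ)-1)*(2-(n:ℝ))*(κ*(Dp x a + Dμ x a)*u x b
        + κ*(p x + μ x)*Du x a b - κ*(Dp x b + Dμ x b)*u x a
        - κ*(p x + μ x)*Du x b a))
      (2*((n:ℝ)-1)*(2-(n:ℝ))*κ*(p x + μ x)*u x b)
      (-(2*((n:ℝ)-1)*(2-(n:ℝ))*κ*(p x + μ x)*u x a))
      (fun jj => U jj * g x jj b) (fun jj => U jj * g x jj a)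
      (fun jj => U jj * u x jj) (fun jj => U jj * Du x a jj) (fun jj => U jj * Du x b jj)
      (u x b) (u x a) (-1) 0 0 (F3 b) (F3 a) F1 (F2 a) (F2 b)
    have e3 := e2.symm.trans e1
    linear_combination e3
  -- key: ∇μ is proportional to u
  have key : ∀ a : Fin n, Dμ x a + u x a * (∑ l, U l * Dμ x l) = 0 := by
    intro a
    have e1 : ∑ l,
        ((((2*((n:ℝ)-1)*((n:ℝ)-2)*κ) * Dp x a + (2*((n:ℝ)-2)^2*κ) * Dμ x a))
            * (U l * u x l)
          + (-(u x a) * (2*((n:ℝ)-1)*((n:ℝ)-2)*κ)) * (U l * Dp x l)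
          + (-(u x a) * (2*((n:ℝ)-2)^2*κ)) * (U l * Dμ x l)
          + (-(2*((n:ℝ)-1)*(2-(n:ℝ))*κ*(p x + μ x))) * (U l * Du x a l)
          + (2*((n:ℝ)-1)*(2-(n:ℝ))*κ*(p x + μ x)) * (U l * Du x l a)) = 0 :=
      Finset.sum_eq_zero fun l _ => by linear_combination (U l) * E2 a l
    have e2 := sum_five
      ((2*((n:ℝ)-1)*((n:ℝ)-2)*κ) * Dp x a + (2*((n:ℝ)-2)^2*κ) * Dμ x a)
      (-(u x a) * (2*((n:ℝ)-1)*((n:ℝ)-2)*κ))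
      (-(u x a) * (2*((n:ℝ)-2)^2*κ))
      (-(2*((n:ℝ)-1)*(2-(n:ℝ))*κ*(p x + μ x)))
      (2*((n:ℝ)-1)*(2-(n:ℝ))*κ*(p x + μ x))
      (fun l => U l * u x l) (fun l => U l * Dp x l) (fun l => U l * Dμ x l)
      (fun l => U l * Du x a l) (fun l => U l * Du x l a)
      (-1) (∑ l, U l * Dp x l) (∑ l, U l * Dμ x l) 0 (∑ l, U l * Du x l a)
      F1 rfl rfl (F2 a) rfl
    have e3 := e2.symm.trans e1
    have hm : Dp x a + u x a * (∑ l, U l * Dp x l)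
        + (p x + μ x) * (∑ l, U l * Du x l a) = 0 := by
      have h := hmot2 x a
      rwa [hcontr (fun m => Dp x m), hcontr (fun m => Du x m a)] at h
    have h0 : (2*((n:ℝ)-2)^2*κ) * (Dμ x a + u x a * (∑ l, U l * Dμ x l)) = 0 := by
      linear_combination (-1) * e3 + (2*((n:ℝ)-1)*(2-(n:ℝ))*κ) * hm
    have hne : (2*((n:ℝ)-2)^2*κ) ≠ 0 := by positivity
    exact (mul_eq_zero.mp h0).resolve_left hne
  -- final step
  have hfin : (2*((n:ℝ)-1)*(2-(n:ℝ))*κ*(p x + μ x)) * (Du x k j - Du x j k) = 0 := by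
    linear_combination (-1) * E2 k j
      + ((2*((n:ℝ)-1)*((n:ℝ)-2)*κ) * u x j) * hchain x k
      - ((2*((n:ℝ)-1)*((n:ℝ)-2)*κ) * u x k) * hchain x j
      + ((2*((n:ℝ)-1)*((n:ℝ)-2)*κ*deriv P (μ x) + 2*((n:ℝ)-2)^2*κ) * u x j) * key k
      - ((2*((n:ℝ)-1)*((n:ℝ)-2)*κ*deriv P (μ x) + 2*((n:ℝ)-2)^2*κ) * u x k) * key j
  have hne : (2*((n:ℝ)-1)*(2-(n:ℝ))*κ*(p x + μ x)) ≠ 0 := by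
    apply mul_ne_zero
    apply mul_ne_zero
    apply mul_ne_zero
    · positivity
    · exact h2n
    · exact hκ
    · exact hpμ x
  have := (mul_eq_zero.mp hfin).resolve_left hne
  linarith [sub_eq_zero.mp this]
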